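/- Real induction principle: Let P be a subset of ℝ that is closed (as a topological subset of ℝ), and let a be a real number. Suppose a ∈ P, and for every c ≥ a with c ∈ P there exists ε > 0 such that every y with c ≤ y ≤ c + ε satisfies y ∈ P. Then every x ≥ a satisfies x ∈ P. -/
import Mathlib

theorem real_induction (P : Set ℝ) (hP : IsClosed P) (a : ℝ) (ha : a ∈ P)
    (hered : ∀ c ≥ a, c ∈ P → ∃ ε > 0, ∀ y, c ≤ y → y ≤ c + ε → y ∈ P) :
    ∀ x ≥ a, x ∈ P := by
  intro x hx
  set T : Set ℝ := {y | y ∈ Set.Icc a x ∧ Set.Icc a y ⊆ P} with hT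
  have haT : a ∈ T := ⟨⟨le_refl a, hx⟩, by intro z hz; simp [le_antisymm hz.2 hz.1, ha]⟩
  have hne : T.Nonempty := ⟨a, haT⟩
  have hbdd : BddAbove T := ⟨x, fun y hy => hy.1.2⟩
  set c := sSup T with hc
  have hTP : T ⊆ P := fun y hy => hy.2 ⟨hy.1.1, le_refl y⟩
  have hcP : c ∈ P := hP.closure_subset
    ((closure_mono hTP) (csSup_mem_closure hne hbdd))
  have hac : a ≤ c := le_csSup hbdd haT
  have hcx : c ≤ x := csSup_le hne fun y hy => hy.1.2
  -- Icc a c ⊆ P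
  have hIcc : Set.Icc a c ⊆ P := by
    intro z hz
    rcases eq_or_lt_of_le hz.2 with h | h
    · exact h ▸ hcP
    · obtain ⟨t, htT, hzt⟩ := exists_lt_of_lt_csSup hne h
      exact htT.2 ⟨hz.1, hzt.le⟩
  obtain ⟨ε, hε, hstep⟩ := hered c hac hcP
  rcases eq_or_lt_of_le hcx with h | h
  · exact h ▸ hcP
  · exfalso
    set y := min (c + ε) x with hy
    have hcy : c < y := lt_min (by linarith) h
    have hyT : y ∈ T := by
      refine ⟨⟨le_trans hac hcy.le, min_le_right _ _⟩, ?_⟩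
      intro z hz
      rcases le_or_gt z c with hzc | hzc
      · exact hIcc ⟨hz.1, hzc⟩
      · exact hstep z hzc.le (le_trans hz.2 (min_le_left _ _))
    exact absurd (le_csSup hbdd hyT) (not_le.mpr hcy)
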